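/- (Easy direction of the linear Positivstellensatz) Let A be a linear pencil and f a linear polynomial. If there exist linear polynomials ℓ_1, ..., ℓ_n, quadratic sos-matrices S_1, ..., S_n, a PSD matrix S, and c ≥ 0 with ℓ_i² + tr(A S_i) ∈ (ℓ_1, ..., ℓ_{i-1}) for each i and f - c - tr(A S) ∈ (ℓ_1, ..., ℓ_n), then f(x) ≥ 0 for every x with A(x) ⪰ 0. -/

import Mathlib

open MvPolynomial Matrix
attribute [local instance] Matrix.frobeniusNormedAddCommGroup

noncomputable section

abbrev RP (n : ℕ) := MvPolynomial (Fin n) ℝ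

/-- Evaluation of the linear pencil `A₀ + ∑ xᵢ Aᵢ` at a point `x ∈ ℝⁿ`. -/
def pencilEval {n α : ℕ} (A0 : Matrix (Fin α) (Fin α) ℝ) (A : Fin n → Matrix (Fin α) (Fin α) ℝ)
    (x : Fin n → ℝ) : Matrix (Fin α) (Fin α) ℝ :=
  A0 + ∑ i, x i • A i

/-- The linear pencil `A₀ + ∑ xᵢ Aᵢ` as a matrix of polynomials. -/
def pencilPoly {n α : ℕ} (A0 : Matrix (Fin α) (Fin α) ℝ) (A : Fin n → Matrix (Fin α) (Fin α) ℝ) :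
    Matrix (Fin α) (Fin α) (RP n) :=
  A0.map C + ∑ i, (X i : RP n) • (A i).map C

/-- `v^* M v` for a matrix of polynomials. -/
def quadForm {n α : ℕ} (M : Matrix (Fin α) (Fin α) (RP n)) (v : Fin α → RP n) : RP n :=
  v ⬝ᵥ (M *ᵥ v)

/-- A sum of squares of polynomials. -/
def IsSos {n : ℕ} (p : RP n) : Prop := ∃ (k : ℕ) (q : Fin k → RP n), p = ∑ i, q i ^ 2

/-- An sos-matrix: a finite sum `∑ vⱼ vⱼ^*` with `vⱼ` vectors of polynomials. -/
def IsSosMatrix {n α : ℕ} (S : Matrix (Fin α) (Fin α) (RP n)) : Prop :=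
  ∃ (k : ℕ) (v : Fin k → Fin α → RP n), S = ∑ j, Matrix.vecMulVec (v j) (v j)

/-- Membership in the quadratic module `M_A` associated to the pencil. -/
def InQuadModule {n α : ℕ} (A0 : Matrix (Fin α) (Fin α) ℝ)
    (A : Fin n → Matrix (Fin α) (Fin α) ℝ) (p : RP n) : Prop :=
  ∃ s, IsSos s ∧ ∃ (k : ℕ) (v : Fin k → Fin α → RP n),
    p = s + ∑ j, quadForm (pencilPoly A0 A) (v j)

/-- Strong infeasibility: positive distance (Frobenius norm) between the range of the
pencil and the PSD cone. -/
def StronglyInfeasible {n α : ℕ} (A0 : Matrix (Fin α) (Fin α) ℝ)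
    (A : Fin n → Matrix (Fin α) (Fin α) ℝ) : Prop :=
  ∃ ε > (0:ℝ), ∀ (x : Fin n → ℝ) (B : Matrix (Fin α) (Fin α) ℝ), B.PosSemidef →
    ε ≤ dist (pencilEval A0 A x) B

lemma map_pencil {n α : ℕ} (A0 : Matrix (Fin α) (Fin α) ℝ) (A : Fin n → Matrix (Fin α) (Fin α) ℝ)
    (x : Fin n → ℝ) : (pencilPoly A0 A).map (eval x) = pencilEval A0 A x := by
  ext a b
  simp only [pencilPoly, pencilEval, Matrix.map_apply, Matrix.add_apply, Matrix.sum_apply,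
    Matrix.smul_apply, smul_eq_mul, map_add, map_sum, _root_.map_mul, eval_X, eval_C]

lemma eval_trace_mul {n α : ℕ} (x : Fin n → ℝ) (M N : Matrix (Fin α) (Fin α) (RP n)) :
    eval x ((M * N).trace) = ((M.map (eval x)) * (N.map (eval x))).trace := by
  simp [Matrix.trace, Matrix.mul_apply, Matrix.diag, map_sum, Matrix.map_apply]

lemma eval_zero_of_mem_span {n : ℕ} {x : Fin n → ℝ} {s : Set (RP n)} {p : RP n}
    (hp : p ∈ Ideal.span s) (hs : ∀ q ∈ s, eval x q = 0) : eval x p = 0 := by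
  refine Submodule.span_induction ?_ (by simp) (fun a b _ _ ha hb => by simp [ha, hb])
    (fun a b _ hb => by simp [smul_eq_mul, hb]) hp
  intro q hq; exact hs q hq

lemma posSemidef_vecMulVec {α : ℕ} (w : Fin α → ℝ) : (Matrix.vecMulVec w w).PosSemidef := by
  refine Matrix.posSemidef_iff_dotProduct_mulVec.mpr ⟨?_, ?_⟩
  · ext a b; simp [Matrix.vecMulVec, Matrix.conjTranspose_apply, mul_comm]
  · intro y
    have : dotProduct (star y) (Matrix.vecMulVec w w *ᵥ y) = (w ⬝ᵥ y) ^ 2 := by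
      simp [Matrix.vecMulVec, dotProduct, Matrix.mulVec, Finset.mul_sum, Finset.sum_mul, pow_two]
      rw [Finset.sum_comm]
      congr 1; ext i; congr 1; ext j; ring
    rw [this]; positivity

lemma trace_nonneg_of_posSemidef {α : ℕ} {M : Matrix (Fin α) (Fin α) ℝ} (h : M.PosSemidef) :
    0 ≤ M.trace := by
  rw [Matrix.trace]
  refine Finset.sum_nonneg fun i _ => ?_
  have := h.dotProduct_mulVec_nonneg (Pi.single i 1)
  simpa [Matrix.mulVec, dotProduct, Pi.single_apply, Matrix.diag, Finset.mul_sum] using this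

lemma trace_mul_nonneg' {α : ℕ} {P B : Matrix (Fin α) (Fin α) ℝ}
    (hP : P.PosSemidef) (hB : B.PosSemidef) : 0 ≤ (P * B).trace := by
  open scoped MatrixOrder in
  rw [← CFC.sqrt_mul_sqrt_self B hB.nonneg, ← mul_assoc, Matrix.trace_mul_cycle]
  open scoped MatrixOrder in
  have h := hP.conjTranspose_mul_mul_same (CFC.sqrt B)
  open scoped MatrixOrder in
  rw [(CFC.sqrt_nonneg B).posSemidef.1.eq] at h
  exact trace_nonneg_of_posSemidef h

/-- Easy direction of the linear Positivstellensatz: the algebraic certificate implies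
nonnegativity of `f` on `S_A`. -/
theorem stmt_8 {n α : ℕ} (A0 : Matrix (Fin α) (Fin α) ℝ)
    (A : Fin n → Matrix (Fin α) (Fin α) ℝ) (hA0 : A0.IsSymm) (hA : ∀ i, (A i).IsSymm)
    (f : RP n) (hf : f.totalDegree ≤ 1)
    (ℓ : Fin n → RP n) (hℓ : ∀ i, (ℓ i).totalDegree ≤ 1)
    (Smat : Fin n → Matrix (Fin α) (Fin α) (RP n))
    (hSmat : ∀ i, IsSosMatrix (Smat i) ∧ ∀ a b, ((Smat i) a b).totalDegree ≤ 2)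
    (S : Matrix (Fin α) (Fin α) ℝ) (hS : S.PosSemidef) (c : ℝ) (hc : 0 ≤ c)
    (h1 : ∀ i : Fin n, ℓ i ^ 2 + (pencilPoly A0 A * Smat i).trace ∈
        Ideal.span (ℓ '' {j : Fin n | j < i}))
    (h2 : f - C c - (pencilPoly A0 A * S.map C).trace ∈ Ideal.span (Set.range ℓ)) :
    ∀ x : Fin n → ℝ, (pencilEval A0 A x).PosSemidef → 0 ≤ eval x f := by
  intro x hx
  have key : ∀ M : Matrix (Fin α) (Fin α) (RP n), IsSosMatrix M →
      0 ≤ eval x ((pencilPoly A0 A * M).trace) := by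
    rintro M ⟨k, v, rfl⟩
    rw [eval_trace_mul, map_pencil]
    have hmap : ((∑ j, Matrix.vecMulVec (v j) (v j)).map (eval x)) =
        ∑ j, Matrix.vecMulVec (fun a => eval x (v j a)) (fun a => eval x (v j a)) := by
      ext a b
      simp [Matrix.map_apply, Matrix.sum_apply, Matrix.vecMulVec_apply]
    rw [hmap, Finset.mul_sum, Matrix.trace_sum]
    exact Finset.sum_nonneg fun j _ => trace_mul_nonneg' hx (posSemidef_vecMulVec _)
  have hz : ∀ m : ℕ, ∀ i : Fin n, i.val = m → eval x (ℓ i) = 0 := by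
    intro m
    induction m using Nat.strong_induction_on with
    | _ m ih =>
      intro i him
      have h0 : eval x (ℓ i ^ 2 + (pencilPoly A0 A * Smat i).trace) = 0 := by
        refine eval_zero_of_mem_span (h1 i) ?_
        rintro q ⟨j, hj, rfl⟩
        exact ih j.val (him ▸ hj) j rfl
      rw [map_add, map_pow] at h0
      have h3 := key (Smat i) (hSmat i).1
      have h4 : eval x (ℓ i) ^ 2 = 0 := le_antisymm (by linarith) (sq_nonneg _)
      exact pow_eq_zero_iff (by norm_num) |>.mp h4
  have h5 : eval x (f - C c - (pencilPoly A0 A * S.map C).trace) = 0 := by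
    refine eval_zero_of_mem_span h2 ?_
    rintro q ⟨j, rfl⟩
    exact hz j.val j rfl
  have h6 : (S.map C : Matrix (Fin α) (Fin α) (RP n)).map (eval x) = S := by
    ext a b; simp [Matrix.map_apply]
  have h7 : 0 ≤ eval x ((pencilPoly A0 A * S.map C).trace) := by
    rw [eval_trace_mul, map_pencil, h6]
    exact trace_mul_nonneg' hx hS
  simp only [map_sub, eval_C] at h5
  linarith
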